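/- Corollary 1 (relaxed δISS condition inside the invariant set): define σ̄_z = σ(‖[W_z U_z b_z]‖_∞), σ̄_f = σ(‖[W_f U_f b_f]‖_∞), φ̄_r = tanh(‖[W_r U_r b_r]‖_∞), and suppose ‖U_r‖_∞ ( (1/4) ‖U_f‖_∞ + σ̄_f ) < 1 − (1/4) ((1 + φ̄_r)/(1 − σ̄_z)) ‖U_z‖_∞. Then the GRU restricted to initial states in [−1,1]^{n_x} is Incrementally Input-to-State Stable: there exist a class-KL function β_Δ and a class-K∞ function γ_Δu such that for every pair of initial states x̄_a, x̄_b with ‖x̄_a‖_∞ ≤ 1 and ‖x̄_b‖_∞ ≤ 1, every pair of input sequences u_a, u_b with ‖u_a(t)‖_∞ ≤ 1 and ‖u_b(t)‖_∞ ≤ 1 for all t, and every k ≥ 0, ‖x_a(k) − x_b(k)‖_∞ ≤ β_Δ(‖x̄_a − x̄_b‖_∞, k) + γ_Δu(sup_t ‖u_a(t) − u_b(t)‖_∞). -/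

import Mathlib

open Real Filter

/-- The _root_.sigmoid activation function. -/
noncomputable def sigmoid (s : ℝ) : ℝ := 1 / (1 + Real.exp (-s))

/-- Induced infinity norm of a matrix (maximum absolute row sum). -/
noncomputable def matNorm {n m : ℕ} (A : Matrix (Fin n) (Fin m) ℝ) : ℝ :=
  ⨆ i, ∑ j, |A i j|

/-- Infinity norm of the horizontal concatenation `[A B c]`
(maximum absolute row sum of the concatenated matrix). -/
noncomputable def catNorm {n m p : ℕ} (A : Matrix (Fin n) (Fin m) ℝ)
    (B : Matrix (Fin n) (Fin p) ℝ) (c : Fin n → ℝ) : ℝ :=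
  ⨆ i, (∑ j, |A i j| + ∑ j, |B i j| + |c i|)

/-- One step of the single-layer GRU:
`x⁺ = z ∘ x + (1 - z) ∘ tanh(W_r u + U_r (f ∘ x) + b_r)`,
`z = σ(W_z u + U_z x + b_z)`, `f = σ(W_f u + U_f x + b_f)`. -/
noncomputable def gruStep {nu nx : ℕ}
    (Wz Wf Wr : Matrix (Fin nx) (Fin nu) ℝ)
    (Uz Uf Ur : Matrix (Fin nx) (Fin nx) ℝ)
    (bz bf br : Fin nx → ℝ)
    (u : Fin nu → ℝ) (x : Fin nx → ℝ) : Fin nx → ℝ :=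
  let z : Fin nx → ℝ := fun i => _root_.sigmoid ((Wz.mulVec u + Uz.mulVec x + bz) i)
  let f : Fin nx → ℝ := fun i => _root_.sigmoid ((Wf.mulVec u + Uf.mulVec x + bf) i)
  let r : Fin nx → ℝ := fun i => Real.tanh ((Wr.mulVec u + Ur.mulVec (f * x) + br) i)
  fun j => z j * x j + (1 - z j) * r j

/-- A function `γ : [0,∞) → [0,∞)` is of class K∞ if it is continuous,
strictly increasing, unbounded and `γ 0 = 0`. -/
def IsKInf (γ : ℝ → ℝ) : Prop :=
  ContinuousOn γ (Set.Ici 0) ∧ StrictMonoOn γ (Set.Ici 0) ∧ γ 0 = 0 ∧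
    ∀ M : ℝ, ∃ s, 0 ≤ s ∧ M < γ s

/-- A function `β : [0,∞) × ℕ → [0,∞)` is of class KL if `β (·, k)` is of class K∞
for each `k`, `β (s, ·)` is nonincreasing, and `β (s, k) → 0` as `k → ∞`. -/
def IsKL (β : ℝ → ℕ → ℝ) : Prop :=
  (∀ k : ℕ, IsKInf fun s => β s k) ∧
    (∀ s : ℝ, 0 ≤ s → ∀ k l : ℕ, k ≤ l → β s l ≤ β s k) ∧
    (∀ s : ℝ, 0 ≤ s → Filter.Tendsto (fun k : ℕ => β s k) Filter.atTop (nhds 0))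

lemma sigmoid_pos (s : ℝ) : 0 < _root_.sigmoid s := by
  unfold _root_.sigmoid; positivity

lemma sigmoid_lt_one (s : ℝ) : _root_.sigmoid s < 1 := by
  unfold _root_.sigmoid
  rw [div_lt_one (by positivity)]
  linarith [Real.exp_pos (-s)]

lemma sigmoid_neg (s : ℝ) : _root_.sigmoid (-s) = 1 - _root_.sigmoid s := by
  unfold _root_.sigmoid
  rw [neg_neg]
  have h1 : (0:ℝ) < 1 + Real.exp s := by positivity
  have h2 : (0:ℝ) < 1 + Real.exp (-s) := by positivity
  have he : Real.exp (-s) * Real.exp s = 1 := by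
    rw [← Real.exp_add]; simp
  field_simp
  nlinarith [he]

lemma sigmoid_monotone : Monotone _root_.sigmoid := by
  intro a b hab
  unfold _root_.sigmoid
  apply div_le_div_of_nonneg_left one_pos.le (by positivity)
  have := Real.exp_le_exp.mpr (neg_le_neg hab)
  linarith

lemma sigmoid_hasDerivAt (s : ℝ) :
    HasDerivAt _root_.sigmoid (Real.exp (-s) / (1 + Real.exp (-s)) ^ 2) s := by
  have h1 : HasDerivAt (fun x : ℝ => 1 + Real.exp (-x)) (-Real.exp (-s)) s := by
    simpa using (HasDerivAt.exp (hasDerivAt_neg s)).const_add 1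
  have h2 : (1 + Real.exp (-s)) ≠ 0 := by positivity
  have := h1.inv h2
  have e : _root_.sigmoid = fun x : ℝ => (1 + Real.exp (-x))⁻¹ := by
    funext x; simp [_root_.sigmoid]
  rw [e]
  simpa [neg_div, neg_neg, Pi.inv_def] using this

lemma sigmoid_lipschitz (a b : ℝ) : |_root_.sigmoid a - _root_.sigmoid b| ≤ (1/4) * |a - b| := by
  have key : ∀ x ∈ Set.univ, HasDerivWithinAt _root_.sigmoid
      (Real.exp (-x) / (1 + Real.exp (-x)) ^ 2) Set.univ x := fun x _ =>
    (sigmoid_hasDerivAt x).hasDerivWithinAt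
  have bound : ∀ x ∈ Set.univ, ‖Real.exp (-x) / (1 + Real.exp (-x)) ^ 2‖ ≤ 1/4 := by
    intro x _
    have he : (0:ℝ) < Real.exp (-x) := Real.exp_pos _
    rw [Real.norm_eq_abs, abs_of_nonneg (by positivity)]
    rw [div_le_iff₀ (by positivity)]
    nlinarith [sq_nonneg (1 - Real.exp (-x))]
  have := convex_univ.norm_image_sub_le_of_norm_hasDerivWithin_le key bound
    (Set.mem_univ b) (Set.mem_univ a)
  simpa [Real.norm_eq_abs] using this

lemma tanh_hasDerivAt (s : ℝ) :
    HasDerivAt Real.tanh (1 / Real.cosh s ^ 2) s := by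
  have h : HasDerivAt (fun x => Real.sinh x / Real.cosh x)
      ((Real.cosh s * Real.cosh s - Real.sinh s * Real.sinh s) / Real.cosh s ^ 2) s :=
    (Real.hasDerivAt_sinh s).div (Real.hasDerivAt_cosh s) (Real.cosh_pos s).ne'
  have e : Real.cosh s * Real.cosh s - Real.sinh s * Real.sinh s = 1 := by
    have := Real.cosh_sq_sub_sinh_sq s
    nlinarith [this]
  have : HasDerivAt (fun x => Real.sinh x / Real.cosh x) (1 / Real.cosh s ^ 2) s := by
    rw [← e] at *; exact h
  simpa [Real.tanh_eq_sinh_div_cosh] using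
    this.congr_of_eventuallyEq (by filter_upwards with x; rw [Real.tanh_eq_sinh_div_cosh])

lemma tanh_lipschitz (a b : ℝ) : |Real.tanh a - Real.tanh b| ≤ |a - b| := by
  have key : ∀ x ∈ Set.univ, HasDerivWithinAt Real.tanh (1 / Real.cosh x ^ 2) Set.univ x :=
    fun x _ => (tanh_hasDerivAt x).hasDerivWithinAt
  have bound : ∀ x ∈ Set.univ, ‖1 / Real.cosh x ^ 2‖ ≤ 1 := by
    intro x _
    have h1 := Real.one_le_cosh x
    rw [Real.norm_eq_abs, abs_of_nonneg (by positivity), div_le_one (by positivity)]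
    nlinarith
  have := convex_univ.norm_image_sub_le_of_norm_hasDerivWithin_le key bound
    (Set.mem_univ b) (Set.mem_univ a)
  simpa [Real.norm_eq_abs] using this

lemma tanh_monotone : Monotone Real.tanh := by
  have : ∀ x, 0 < 1 / Real.cosh x ^ 2 := fun x => by positivity
  exact StrictMono.monotone <| strictMono_of_hasDerivAt_pos tanh_hasDerivAt this

lemma abs_tanh_le {a m : ℝ} (h : |a| ≤ m) : |Real.tanh a| ≤ Real.tanh m := by
  rw [abs_le] at h ⊢
  constructor
  · have := tanh_monotone h.1
    rwa [Real.tanh_neg] at this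
  · exact tanh_monotone h.2

lemma tanh_lt_one' (x : ℝ) : Real.tanh x < 1 := by
  rw [Real.tanh_eq_sinh_div_cosh, div_lt_one (Real.cosh_pos x), Real.sinh_eq, Real.cosh_eq]
  have := Real.exp_pos (-x)
  linarith

lemma sigmoid_bounds {a m : ℝ} (h : |a| ≤ m) :
    1 - _root_.sigmoid m ≤ _root_.sigmoid a ∧ _root_.sigmoid a ≤ _root_.sigmoid m := by
  rw [abs_le] at h
  refine ⟨?_, _root_.sigmoid_monotone h.2⟩
  have := _root_.sigmoid_monotone h.1
  rwa [_root_.sigmoid_neg] at this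

lemma rowSum_le_matNorm {n m : ℕ} (A : Matrix (Fin n) (Fin m) ℝ) (i : Fin n) :
    ∑ j, |A i j| ≤ matNorm A := by
  unfold matNorm
  exact le_ciSup (f := fun i : Fin n => ∑ j, |A i j|) (Set.Finite.bddAbove (Set.finite_range _)) i

lemma matNorm_nonneg {n m : ℕ} (A : Matrix (Fin n) (Fin m) ℝ) : 0 ≤ matNorm A := by
  cases isEmpty_or_nonempty (Fin n) with
  | inl h => simp [matNorm, ciSup_of_empty]
  | inr h =>
    exact Real.iSup_nonneg fun i => Finset.sum_nonneg fun j _ => abs_nonneg _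

lemma row_le_catNorm {n m p : ℕ} (A : Matrix (Fin n) (Fin m) ℝ)
    (B : Matrix (Fin n) (Fin p) ℝ) (c : Fin n → ℝ) (i : Fin n) :
    ∑ j, |A i j| + ∑ j, |B i j| + |c i| ≤ catNorm A B c := by
  unfold catNorm
  exact le_ciSup (f := fun i : Fin n => ∑ j, |A i j| + ∑ j, |B i j| + |c i|) (Set.Finite.bddAbove (Set.finite_range _)) i

lemma catNorm_nonneg {n m p : ℕ} (A : Matrix (Fin n) (Fin m) ℝ)
    (B : Matrix (Fin n) (Fin p) ℝ) (c : Fin n → ℝ) : 0 ≤ catNorm A B c := by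
  apply Real.iSup_nonneg
  intro i
  have := Finset.sum_nonneg (fun j (_ : j ∈ Finset.univ) => abs_nonneg (A i j))
  have := Finset.sum_nonneg (fun j (_ : j ∈ Finset.univ) => abs_nonneg (B i j))
  have := abs_nonneg (c i)
  linarith

lemma abs_mulVec_le {n m : ℕ} (A : Matrix (Fin n) (Fin m) ℝ) (x : Fin m → ℝ) (i : Fin n) :
    |A.mulVec x i| ≤ (∑ j, |A i j|) * ‖x‖ := by
  have h1 : |A.mulVec x i| ≤ ∑ j, |A i j * x j| := by
    simpa [Matrix.mulVec, dotProduct] using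
      Finset.abs_sum_le_sum_abs (fun j => A i j * x j) Finset.univ
  refine h1.trans ?_
  rw [Finset.sum_mul]
  apply Finset.sum_le_sum
  intro j _
  rw [abs_mul]
  exact mul_le_mul_of_nonneg_left (norm_le_pi_norm x j) (abs_nonneg _)

lemma abs_mulVec_le' {n m : ℕ} (A : Matrix (Fin n) (Fin m) ℝ) (x : Fin m → ℝ) (i : Fin n) :
    |A.mulVec x i| ≤ matNorm A * ‖x‖ :=
  (abs_mulVec_le A x i).trans
    (mul_le_mul_of_nonneg_right (rowSum_le_matNorm A i) (norm_nonneg x))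

lemma arg_abs_le {n m p : ℕ} (A : Matrix (Fin n) (Fin m) ℝ)
    (B : Matrix (Fin n) (Fin p) ℝ) (c : Fin n → ℝ) (u : Fin m → ℝ) (x : Fin p → ℝ)
    (hu : ‖u‖ ≤ 1) (hx : ‖x‖ ≤ 1) (i : Fin n) :
    |(A.mulVec u + B.mulVec x + c) i| ≤ catNorm A B c := by
  have h1 := (abs_mulVec_le A u i).trans
    (mul_le_mul_of_nonneg_left hu (Finset.sum_nonneg fun j _ => abs_nonneg _))
  have h2 := (abs_mulVec_le B x i).trans
    (mul_le_mul_of_nonneg_left hx (Finset.sum_nonneg fun j _ => abs_nonneg _))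
  calc |(A.mulVec u + B.mulVec x + c) i|
      ≤ |A.mulVec u i| + |B.mulVec x i| + |c i| := by
        simp only [Pi.add_apply]
        exact (abs_add_le _ _).trans (by linarith [abs_add_le (A.mulVec u i) (B.mulVec x i)])
    _ ≤ (∑ j, |A i j|) * 1 + (∑ j, |B i j|) * 1 + |c i| := by linarith
    _ ≤ catNorm A B c := by simpa using row_le_catNorm A B c i


lemma abs_tanh_le_one (x : ℝ) : |Real.tanh x| ≤ 1 := by
  rw [abs_le]
  constructor
  · have := tanh_lt_one' (-x)
    rw [Real.tanh_neg] at this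
    linarith
  · exact (tanh_lt_one' x).le

lemma gruStep_norm_le {nu nx : ℕ}
    (Wz Wf Wr : Matrix (Fin nx) (Fin nu) ℝ) (Uz Uf Ur : Matrix (Fin nx) (Fin nx) ℝ)
    (bz bf br : Fin nx → ℝ) (u : Fin nu → ℝ) (x : Fin nx → ℝ) (hx : ‖x‖ ≤ 1) :
    ‖gruStep Wz Wf Wr Uz Uf Ur bz bf br u x‖ ≤ 1 := by
  rw [pi_norm_le_iff_of_nonneg zero_le_one]
  intro i
  simp only [gruStep, Real.norm_eq_abs]
  set z := _root_.sigmoid ((Wz.mulVec u + Uz.mulVec x + bz) i) with hz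
  have hz0 : 0 < z := _root_.sigmoid_pos _
  have hz1 : z < 1 := _root_.sigmoid_lt_one _
  have hxi : |x i| ≤ 1 := (norm_le_pi_norm x i).trans hx
  have hr : |Real.tanh ((Wr.mulVec u + Ur.mulVec
      ((fun j => _root_.sigmoid ((Wf.mulVec u + Uf.mulVec x + bf) j)) * x) + br) i)| ≤ 1 :=
    abs_tanh_le_one _
  calc |z * x i + (1 - z) * Real.tanh ((Wr.mulVec u + Ur.mulVec
        ((fun j => _root_.sigmoid ((Wf.mulVec u + Uf.mulVec x + bf) j)) * x) + br) i)|
      ≤ |z * x i| + |(1 - z) * Real.tanh ((Wr.mulVec u + Ur.mulVec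
        ((fun j => _root_.sigmoid ((Wf.mulVec u + Uf.mulVec x + bf) j)) * x) + br) i)| := abs_add_le _ _
    _ ≤ z * 1 + (1 - z) * 1 := by
        rw [abs_mul, abs_mul, abs_of_pos hz0, abs_of_pos (by linarith : (0:ℝ) < 1 - z)]
        have := mul_le_mul_of_nonneg_left hxi hz0.le
        have := mul_le_mul_of_nonneg_left hr (by linarith : (0:ℝ) ≤ 1 - z)
        linarith
    _ = 1 := by ring


lemma combine_ineq {za σz A D dx du : ℝ} (h1 : za ≤ σz) (hA1 : A ≤ 1)
    (hza : 0 ≤ za) (hdx : 0 ≤ dx) (hdu : 0 ≤ du) (hD : 0 ≤ D) :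
    za * dx + (1 - za) * (A * dx + D * du) ≤ (σz + (1 - σz) * A) * dx + D * du := by
  nlinarith [mul_nonneg (mul_nonneg (sub_nonneg.2 h1) (sub_nonneg.2 hA1)) hdx,
    mul_nonneg (mul_nonneg hza hD) hdu]

lemma sigmoid_arg_diff {n m p : ℕ} (A : Matrix (Fin n) (Fin m) ℝ)
    (B : Matrix (Fin n) (Fin p) ℝ) (c : Fin n → ℝ) (u v : Fin m → ℝ) (x y : Fin p → ℝ)
    (i : Fin n) :
    |_root_.sigmoid ((A.mulVec u + B.mulVec x + c) i) - _root_.sigmoid ((A.mulVec v + B.mulVec y + c) i)|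
      ≤ (1/4) * (matNorm A * ‖u - v‖ + matNorm B * ‖x - y‖) := by
  refine (sigmoid_lipschitz _ _).trans ?_
  have e : (A.mulVec u + B.mulVec x + c) i - (A.mulVec v + B.mulVec y + c) i
      = A.mulVec (u - v) i + B.mulVec (x - y) i := by
    simp [Matrix.mulVec_sub]; ring
  rw [e]
  have h := (abs_add_le (A.mulVec (u - v) i) (B.mulVec (x - y) i)).trans
    (add_le_add (abs_mulVec_le' A _ i) (abs_mulVec_le' B _ i))
  linarith

set_option maxHeartbeats 2000000 in
lemma gruStep_contract {nu nx : ℕ}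
    (Wz Wf Wr : Matrix (Fin nx) (Fin nu) ℝ) (Uz Uf Ur : Matrix (Fin nx) (Fin nx) ℝ)
    (bz bf br : Fin nx → ℝ)
    (hA : matNorm Ur * (_root_.sigmoid (catNorm Wf Uf bf) + (1/4) * matNorm Uf) ≤ 1)
    (ua ub : Fin nu → ℝ) (xa xb : Fin nx → ℝ)
    (hua : ‖ua‖ ≤ 1) (hub : ‖ub‖ ≤ 1) (hxa : ‖xa‖ ≤ 1) (hxb : ‖xb‖ ≤ 1) :
    ‖gruStep Wz Wf Wr Uz Uf Ur bz bf br ua xa - gruStep Wz Wf Wr Uz Uf Ur bz bf br ub xb‖ ≤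
      (_root_.sigmoid (catNorm Wz Uz bz) + (1 - _root_.sigmoid (catNorm Wz Uz bz)) *
          (matNorm Ur * (_root_.sigmoid (catNorm Wf Uf bf) + (1/4) * matNorm Uf)) +
        (1/4) * (1 + Real.tanh (catNorm Wr Ur br)) * matNorm Uz) * ‖xa - xb‖ +
      (matNorm Wr + matNorm Ur * ((1/4) * matNorm Wf) +
        (1/4) * (1 + Real.tanh (catNorm Wr Ur br)) * matNorm Wz) * ‖ua - ub‖ := by
  -- abbreviations
  set σz := _root_.sigmoid (catNorm Wz Uz bz) with hσz
  set σf := _root_.sigmoid (catNorm Wf Uf bf) with hσf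
  set φr := Real.tanh (catNorm Wr Ur br) with hφr
  set nWz := matNorm Wz; set nUz := matNorm Uz
  set nWf := matNorm Wf; set nUf := matNorm Uf
  set nWr := matNorm Wr; set nUr := matNorm Ur
  set dx := ‖xa - xb‖ with hdx
  set du := ‖ua - ub‖ with hdu
  have hdx0 : 0 ≤ dx := norm_nonneg _
  have hdu0 : 0 ≤ du := norm_nonneg _
  have hσz0 : 0 < σz := _root_.sigmoid_pos _
  have hσz1 : σz < 1 := _root_.sigmoid_lt_one _
  have hσf0 : 0 < σf := _root_.sigmoid_pos _
  have hσf1 : σf < 1 := _root_.sigmoid_lt_one _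
  have hφr0 : 0 ≤ φr := by
    have := tanh_monotone (catNorm_nonneg Wr Ur br)
    rwa [Real.tanh_zero] at this
  have hφr1 : φr < 1 := tanh_lt_one' _
  have hnWz : 0 ≤ nWz := matNorm_nonneg _
  have hnUz : 0 ≤ nUz := matNorm_nonneg _
  have hnWf : 0 ≤ nWf := matNorm_nonneg _
  have hnUf : 0 ≤ nUf := matNorm_nonneg _
  have hnWr : 0 ≤ nWr := matNorm_nonneg _
  have hnUr : 0 ≤ nUr := matNorm_nonneg _
  have hA0 : 0 ≤ nUr * (σf + (1/4) * nUf) := by positivity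
  have hD0 : 0 ≤ nWr + nUr * ((1/4) * nWf) := by positivity
  have hRHS : 0 ≤ (σz + (1 - σz) * (nUr * (σf + (1/4) * nUf)) + (1/4) * (1 + φr) * nUz) * dx +
      (nWr + nUr * ((1/4) * nWf) + (1/4) * (1 + φr) * nWz) * du := by
    have h1 : 0 ≤ σz + (1 - σz) * (nUr * (σf + (1/4) * nUf)) + (1/4) * (1 + φr) * nUz := by
      have : 0 ≤ (1 - σz) * (nUr * (σf + (1/4) * nUf)) :=
        mul_nonneg (by linarith) hA0
      have : 0 ≤ (1/4) * (1 + φr) * nUz := by positivity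
      linarith [mul_nonneg (by linarith : (0:ℝ) ≤ 1 - σz) hA0]
    have h2 : 0 ≤ nWr + nUr * ((1/4) * nWf) + (1/4) * (1 + φr) * nWz := by positivity
    exact add_nonneg (mul_nonneg h1 hdx0) (mul_nonneg h2 hdu0)
  rw [pi_norm_le_iff_of_nonneg hRHS]
  intro i
  simp only [gruStep, Pi.sub_apply, Real.norm_eq_abs]
  set fa : Fin nx → ℝ := fun j => _root_.sigmoid ((Wf.mulVec ua + Uf.mulVec xa + bf) j) with hfa
  set fb : Fin nx → ℝ := fun j => _root_.sigmoid ((Wf.mulVec ub + Uf.mulVec xb + bf) j) with hfb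
  set za := _root_.sigmoid ((Wz.mulVec ua + Uz.mulVec xa + bz) i) with hza
  set zb := _root_.sigmoid ((Wz.mulVec ub + Uz.mulVec xb + bz) i) with hzb
  set ra := Real.tanh ((Wr.mulVec ua + Ur.mulVec (fa * xa) + br) i) with hra
  set rb := Real.tanh ((Wr.mulVec ub + Ur.mulVec (fb * xb) + br) i) with hrb
  -- bounds on gates
  have hza0 : 0 < za := _root_.sigmoid_pos _
  have hza1 : za ≤ σz :=
    (sigmoid_bounds (arg_abs_le Wz Uz bz ua xa hua hxa i)).2
  have hza2 : za < 1 := _root_.sigmoid_lt_one _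
  have hdz : |za - zb| ≤ (1/4) * (nWz * du + nUz * dx) :=
    sigmoid_arg_diff Wz Uz bz ua ub xa xb i
  -- f-gate bounds
  have hfax : ‖fa * xa - fb * xb‖ ≤ σf * dx + (1/4) * (nWf * du + nUf * dx) := by
    have hS : 0 ≤ σf * dx + (1/4) * (nWf * du + nUf * dx) := by positivity
    rw [pi_norm_le_iff_of_nonneg hS]
    intro j
    have e : (fa * xa - fb * xb) j = fa j * (xa j - xb j) + (fa j - fb j) * xb j := by
      simp [hfa, hfb]; ring
    rw [Real.norm_eq_abs, e]
    have h1 : |fa j| ≤ σf := by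
      rw [abs_of_pos (_root_.sigmoid_pos _)]
      exact (sigmoid_bounds (arg_abs_le Wf Uf bf ua xa hua hxa j)).2
    have h2 : |fa j - fb j| ≤ (1/4) * (nWf * du + nUf * dx) :=
      sigmoid_arg_diff Wf Uf bf ua ub xa xb j
    have h3 : |xa j - xb j| ≤ dx := by
      have := norm_le_pi_norm (xa - xb) j
      simpa [Real.norm_eq_abs] using this
    have h4 : |xb j| ≤ 1 := (norm_le_pi_norm xb j).trans hxb
    calc |fa j * (xa j - xb j) + (fa j - fb j) * xb j|
        ≤ |fa j| * |xa j - xb j| + |fa j - fb j| * |xb j| := by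
          rw [← abs_mul, ← abs_mul]; exact abs_add_le _ _
      _ ≤ σf * dx + ((1/4) * (nWf * du + nUf * dx)) * 1 :=
          add_le_add (mul_le_mul h1 h3 (abs_nonneg _) (_root_.sigmoid_pos _).le)
            (mul_le_mul h2 h4 (abs_nonneg _) (by positivity))
      _ = σf * dx + (1/4) * (nWf * du + nUf * dx) := by ring
  have hfbx1 : ‖fb * xb‖ ≤ 1 := by
    rw [pi_norm_le_iff_of_nonneg zero_le_one]
    intro j
    rw [Real.norm_eq_abs, Pi.mul_apply, abs_mul]
    have h1 : |fb j| ≤ 1 := by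
      rw [abs_of_pos (_root_.sigmoid_pos _)]; exact (_root_.sigmoid_lt_one _).le
    have h2 : |xb j| ≤ 1 := (norm_le_pi_norm xb j).trans hxb
    exact (mul_le_mul h1 h2 (abs_nonneg _) zero_le_one).trans_eq (one_mul 1)
  have hrbb : |rb| ≤ φr :=
    abs_tanh_le (arg_abs_le Wr Ur br ub (fb * xb) hub hfbx1 i)
  -- r difference
  have hdr : |ra - rb| ≤ nWr * du + nUr * (σf * dx + (1/4) * (nWf * du + nUf * dx)) := by
    refine (tanh_lipschitz _ _).trans ?_
    have e : (Wr.mulVec ua + Ur.mulVec (fa * xa) + br) i -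
        (Wr.mulVec ub + Ur.mulVec (fb * xb) + br) i
        = Wr.mulVec (ua - ub) i + Ur.mulVec (fa * xa - fb * xb) i := by
      simp [Matrix.mulVec_sub]; ring
    rw [e]
    have h1 := abs_mulVec_le' Wr (ua - ub) i
    have h2 := abs_mulVec_le' Ur (fa * xa - fb * xb) i
    have h3 := mul_le_mul_of_nonneg_left hfax hnUr
    have := (abs_add_le (Wr.mulVec (ua - ub) i) (Ur.mulVec (fa * xa - fb * xb) i))
    linarith
  -- main decomposition
  have key : za * xa i + (1 - za) * ra - (zb * xb i + (1 - zb) * rb)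
      = za * (xa i - xb i) + (za - zb) * (xb i - rb) + (1 - za) * (ra - rb) := by ring
  rw [key]
  have hxai : |xa i - xb i| ≤ dx := by
    have := norm_le_pi_norm (xa - xb) i
    simpa [Real.norm_eq_abs] using this
  have hxbr : |xb i - rb| ≤ 1 + φr := by
    have h1 : |xb i| ≤ 1 := (norm_le_pi_norm xb i).trans hxb
    have := abs_sub (xb i) rb
    calc |xb i - rb| ≤ |xb i| + |rb| := abs_sub _ _
      _ ≤ 1 + φr := add_le_add h1 hrbb
  have step1 : |za * (xa i - xb i) + (za - zb) * (xb i - rb) + (1 - za) * (ra - rb)|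
      ≤ za * dx + ((1/4) * (nWz * du + nUz * dx)) * (1 + φr) +
        (1 - za) * ((nUr * (σf + (1/4) * nUf)) * dx + (nWr + nUr * ((1/4) * nWf)) * du) := by
    have t1 : |za * (xa i - xb i)| ≤ za * dx := by
      rw [abs_mul, abs_of_pos hza0]
      exact mul_le_mul_of_nonneg_left hxai hza0.le
    have t2 : |(za - zb) * (xb i - rb)| ≤ ((1/4) * (nWz * du + nUz * dx)) * (1 + φr) := by
      rw [abs_mul]
      exact mul_le_mul hdz hxbr (abs_nonneg _) (by positivity)
    have t3 : |(1 - za) * (ra - rb)| ≤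
        (1 - za) * ((nUr * (σf + (1/4) * nUf)) * dx + (nWr + nUr * ((1/4) * nWf)) * du) := by
      rw [abs_mul, abs_of_pos (by linarith : (0:ℝ) < 1 - za)]
      refine mul_le_mul_of_nonneg_left ?_ (by linarith)
      calc |ra - rb| ≤ nWr * du + nUr * (σf * dx + (1/4) * (nWf * du + nUf * dx)) := hdr
        _ = (nUr * (σf + (1/4) * nUf)) * dx + (nWr + nUr * ((1/4) * nWf)) * du := by ring
    calc |za * (xa i - xb i) + (za - zb) * (xb i - rb) + (1 - za) * (ra - rb)|
        ≤ |za * (xa i - xb i) + (za - zb) * (xb i - rb)| + |(1 - za) * (ra - rb)| := abs_add_le _ _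
      _ ≤ |za * (xa i - xb i)| + |(za - zb) * (xb i - rb)| + |(1 - za) * (ra - rb)| := by
          linarith [abs_add_le (za * (xa i - xb i)) ((za - zb) * (xb i - rb))]
      _ ≤ _ := by linarith
  have step2 := combine_ineq hza1 hA hza0.le hdx0 hdu0 hD0
  nlinarith [step1, step2]

set_option maxHeartbeats 3000000 in
/-- **Corollary 1 (relaxed δISS condition inside the invariant set).**
With `σ̄_z = σ(‖[W_z U_z b_z]‖_∞)`, `σ̄_f = σ(‖[W_f U_f b_f]‖_∞)`,
`φ̄_r = tanh(‖[W_r U_r b_r]‖_∞)`, if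
`‖U_r‖_∞ ((1/4) ‖U_f‖_∞ + σ̄_f) < 1 - (1/4) ((1 + φ̄_r)/(1 - σ̄_z)) ‖U_z‖_∞`
then the GRU restricted to initial states in `[-1,1]^{n_x}` is Incrementally
Input-to-State Stable. -/
theorem gru_deltaISS_relaxed {nu nx : ℕ}
    (Wz Wf Wr : Matrix (Fin nx) (Fin nu) ℝ)
    (Uz Uf Ur : Matrix (Fin nx) (Fin nx) ℝ)
    (bz bf br : Fin nx → ℝ)
    (hcond : matNorm Ur * ((1 / 4) * matNorm Uf + _root_.sigmoid (catNorm Wf Uf bf)) <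
      1 - (1 / 4) * ((1 + Real.tanh (catNorm Wr Ur br)) /
        (1 - _root_.sigmoid (catNorm Wz Uz bz))) * matNorm Uz) :
    ∃ β : ℝ → ℕ → ℝ, ∃ γu : ℝ → ℝ, IsKL β ∧ IsKInf γu ∧
      ∀ xbara xbarb : Fin nx → ℝ, ‖xbara‖ ≤ 1 → ‖xbarb‖ ≤ 1 →
        ∀ ua ub : ℕ → Fin nu → ℝ, (∀ t, ‖ua t‖ ≤ 1) → (∀ t, ‖ub t‖ ≤ 1) →
          ∀ xa xb : ℕ → Fin nx → ℝ, xa 0 = xbara → xb 0 = xbarb →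
            (∀ k, xa (k + 1) = gruStep Wz Wf Wr Uz Uf Ur bz bf br (ua k) (xa k)) →
            (∀ k, xb (k + 1) = gruStep Wz Wf Wr Uz Uf Ur bz bf br (ub k) (xb k)) →
              ∀ k : ℕ, ‖xa k - xb k‖ ≤ β ‖xbara - xbarb‖ k + γu (⨆ t, ‖ua t - ub t‖) := by
  set σz := _root_.sigmoid (catNorm Wz Uz bz) with hσzdef
  set σf := _root_.sigmoid (catNorm Wf Uf bf) with hσfdef
  set φr := Real.tanh (catNorm Wr Ur br) with hφrdef
  set nWz := matNorm Wz; set nUz := matNorm Uz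
  set nWf := matNorm Wf; set nUf := matNorm Uf
  set nWr := matNorm Wr; set nUr := matNorm Ur
  have hσz0 : 0 < σz := _root_.sigmoid_pos _
  have hσz1 : σz < 1 := _root_.sigmoid_lt_one _
  have h1σ : 0 < 1 - σz := by linarith
  have hσf0 : 0 < σf := _root_.sigmoid_pos _
  have hφr0 : 0 ≤ φr := by
    have := tanh_monotone (catNorm_nonneg Wr Ur br)
    rwa [Real.tanh_zero] at this
  have hnWz : 0 ≤ nWz := matNorm_nonneg _
  have hnUz : 0 ≤ nUz := matNorm_nonneg _
  have hnWf : 0 ≤ nWf := matNorm_nonneg _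
  have hnUf : 0 ≤ nUf := matNorm_nonneg _
  have hnWr : 0 ≤ nWr := matNorm_nonneg _
  have hnUr : 0 ≤ nUr := matNorm_nonneg _
  set A := nUr * (σf + (1/4) * nUf) with hAdef
  set B := (1/4) * (1 + φr) * nUz with hBdef
  have hB0 : 0 ≤ B := by positivity
  have hA0 : 0 ≤ A := by positivity
  have hkey : A * (1 - σz) < (1 - σz) - B := by
    have h := mul_lt_mul_of_pos_right hcond h1σ
    have e : (1 - 1/4 * ((1 + φr) / (1 - σz)) * nUz) * (1 - σz) = (1 - σz) - B := by
      field_simp [hBdef]; ring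
    rw [e] at h
    calc A * (1 - σz) = (nUr * (1/4 * nUf + σf)) * (1 - σz) := by rw [hAdef]; ring
      _ < (1 - σz) - B := h
  have hA1 : A ≤ 1 := by nlinarith
  set α := σz + (1 - σz) * A + B with hαdef
  have hα0 : 0 < α := by nlinarith [mul_nonneg h1σ.le hA0]
  have hα1 : α < 1 := by nlinarith
  set c := nWr + nUr * ((1/4) * nWf) + (1/4) * (1 + φr) * nWz with hcdef
  have hc0 : 0 ≤ c := by positivity
  set C := c / (1 - α) + 1 with hCdef
  have hC0 : 0 < C := by
    have h : 0 ≤ c / (1 - α) := div_nonneg hc0 (by linarith)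
    rw [hCdef]
    linarith
  have hcontr : ∀ (u v : Fin nu → ℝ) (x y : Fin nx → ℝ), ‖u‖ ≤ 1 → ‖v‖ ≤ 1 → ‖x‖ ≤ 1 → ‖y‖ ≤ 1 →
      ‖gruStep Wz Wf Wr Uz Uf Ur bz bf br u x - gruStep Wz Wf Wr Uz Uf Ur bz bf br v y‖ ≤
        α * ‖x - y‖ + c * ‖u - v‖ := by
    intro u v x y h1 h2 h3 h4
    exact gruStep_contract Wz Wf Wr Uz Uf Ur bz bf br hA1 u v x y h1 h2 h3 h4
  clear_value σz σf φr nWz nUz nWf nUf nWr nUr A B α c C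
  refine ⟨fun s k => α ^ k * s, fun s => C * s, ⟨?_, ?_, ?_⟩, ⟨?_, ?_, ?_, ?_⟩, ?_⟩
  · -- K∞ in s for each k
    intro k
    have hpk : 0 < α ^ k := pow_pos hα0 k
    refine ⟨(continuous_const.mul continuous_id).continuousOn, ?_, mul_zero _, ?_⟩
    · intro a _ b _ hab
      exact mul_lt_mul_of_pos_left hab hpk
    · intro M
      refine ⟨(max M 0 + 1) / α ^ k, ?_, ?_⟩
      · positivity
      · show M < α ^ k * ((max M 0 + 1) / α ^ k)
        rw [mul_div_cancel₀ _ hpk.ne']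
        have := le_max_left M 0
        linarith
  · -- nonincreasing in k
    intro s hs k l hkl
    exact mul_le_mul_of_nonneg_right (pow_le_pow_of_le_one hα0.le hα1.le hkl) hs
  · -- tends to 0
    intro s _
    simpa using (tendsto_pow_atTop_nhds_zero_of_lt_one hα0.le hα1).mul_const s
  · exact (continuous_const.mul continuous_id).continuousOn
  · intro a _ b _ hab
    exact mul_lt_mul_of_pos_left hab hC0
  · exact mul_zero _
  · intro M
    refine ⟨(max M 0 + 1) / C, by positivity, ?_⟩
    show M < C * ((max M 0 + 1) / C)
    rw [mul_div_cancel₀ _ hC0.ne']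
    have := le_max_left M 0
    linarith
  · -- the δISS estimate
    intro xbara xbarb hxa1 hxb1 ua ub hua hub xa xb hxa0 hxb0 hstepa hstepb
    have hxan : ∀ k, ‖xa k‖ ≤ 1 := by
      intro k
      induction k with
      | zero => rw [hxa0]; exact hxa1
      | succ n ih => rw [hstepa n]; exact gruStep_norm_le _ _ _ _ _ _ _ _ _ _ _ ih
    have hxbn : ∀ k, ‖xb k‖ ≤ 1 := by
      intro k
      induction k with
      | zero => rw [hxb0]; exact hxb1
      | succ n ih => rw [hstepb n]; exact gruStep_norm_le _ _ _ _ _ _ _ _ _ _ _ ih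
    set U := ⨆ t, ‖ua t - ub t‖ with hUdef
    have hbdd : BddAbove (Set.range fun t => ‖ua t - ub t‖) := by
      refine ⟨2, ?_⟩
      rintro y ⟨t, rfl⟩
      calc ‖ua t - ub t‖ ≤ ‖ua t‖ + ‖ub t‖ := norm_sub_le _ _
        _ ≤ 2 := by linarith [hua t, hub t]
    have hUb : ∀ t, ‖ua t - ub t‖ ≤ U := fun t => le_ciSup hbdd t
    have hU0 : 0 ≤ U := le_trans (norm_nonneg _) (hUb 0)
    have hfield : α * (c / (1 - α)) + c = c / (1 - α) := by
      have h : (1:ℝ) - α ≠ 0 := ne_of_gt (by linarith)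
      field_simp
      ring
    have main : ∀ k, ‖xa k - xb k‖ ≤ α ^ k * ‖xbara - xbarb‖ + (c / (1 - α)) * U := by
      intro k
      induction k with
      | zero =>
        rw [hxa0, hxb0, pow_zero, one_mul]
        have : 0 ≤ (c / (1 - α)) * U := mul_nonneg (div_nonneg hc0 (by linarith)) hU0
        linarith
      | succ n ih =>
        have hstep : ‖xa (n+1) - xb (n+1)‖ ≤ α * ‖xa n - xb n‖ + c * ‖ua n - ub n‖ := by
          rw [hstepa n, hstepb n]
          exact hcontr (ua n) (ub n) (xa n) (xb n) (hua n) (hub n) (hxan n) (hxbn n)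
        calc ‖xa (n+1) - xb (n+1)‖ ≤ α * ‖xa n - xb n‖ + c * ‖ua n - ub n‖ := hstep
          _ ≤ α * (α ^ n * ‖xbara - xbarb‖ + (c / (1 - α)) * U) + c * U := by
              have h1 := mul_le_mul_of_nonneg_left ih hα0.le
              have h2 := mul_le_mul_of_nonneg_left (hUb n) hc0
              linarith
          _ = α ^ (n+1) * ‖xbara - xbarb‖ + (α * (c / (1 - α)) + c) * U := by ring
          _ = α ^ (n+1) * ‖xbara - xbarb‖ + (c / (1 - α)) * U := by rw [hfield]
    intro k
    have := main k
    have hle : (c / (1 - α)) * U ≤ C * U := by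
      rw [hCdef]
      nlinarith
    show ‖xa k - xb k‖ ≤ α ^ k * ‖xbara - xbarb‖ + C * U
    linarith
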